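/- arXiv:1709.01111 — 2 statements merged into one kernel-verified Lean document; each statement's English description precedes it below -/
import Mathlib

section
/- For every p ∈ [0,1], the Pauli covariance parameter of the amplitude damping channel A_p equals cov_P(A_p) = (1/2)‖A_p − (A_p)_P‖_⋄ = p/2, where (A_p)_P is the Pauli twirl of A_p. -/
open scoped BigOperators Kronecker ComplexOrder
open Matrix MeasureTheory Filter

noncomputable section

abbrev Mat (n : ℕ) := Matrix (Fin n) (Fin n) ℂ

/-- A density matrix: positive semidefinite with unit trace. -/
def IsDensity {ι : Type} [Fintype ι] (ρ : Matrix ι ι ℂ) : Prop :=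
  ρ.PosSemidef ∧ ρ.trace = 1

/-- The trace norm ‖M‖₁ = tr √(MᴴM). -/
def traceNorm {ι : Type} [Fintype ι] [DecidableEq ι] (M : Matrix ι ι ℂ) : ℝ :=
  ((Matrix.posSemidef_conjTranspose_mul_self M).1.eigenvectorUnitary.1
    * Matrix.diagonal (((↑) : ℝ → ℂ) ∘ (√·) ∘ (Matrix.posSemidef_conjTranspose_mul_self M).1.eigenvalues)
    * (star (Matrix.posSemidef_conjTranspose_mul_self M).1.eigenvectorUnitary : Matrix ι ι ℂ)).trace.re

/-- The rank-one operator |v⟩⟨v| associated to a vector. -/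
def vecState {ι : Type} (v : ι → ℂ) : Matrix ι ι ℂ :=
  Matrix.of fun i j => v i * star (v j)

/-- Partial trace over the first tensor factor. -/
def ptraceLeft {R A : Type} [Fintype R] (M : Matrix (R × A) (R × A) ℂ) : Matrix A A ℂ :=
  Matrix.of fun a a' => ∑ r, M (r, a) (r, a')

/-- Partial trace over the second tensor factor. -/
def ptraceRight {A E : Type} [Fintype E] (M : Matrix (A × E) (A × E) ℂ) : Matrix A A ℂ :=
  Matrix.of fun a a' => ∑ e, M (a, e) (a', e)

/-- The extension id_R ⊗ Φ of a linear map on matrices. -/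
def idTensor {R A B : Type} (Φ : Matrix A A ℂ →ₗ[ℂ] Matrix B B ℂ) :
    Matrix (R × A) (R × A) ℂ →ₗ[ℂ] Matrix (R × B) (R × B) ℂ where
  toFun M := Matrix.of fun p q => Φ (Matrix.of fun a a' => M (p.1, a) (q.1, a')) p.2 q.2
  map_add' M N := by
    ext p q
    have h : (Matrix.of fun a a' => M (p.1, a) (q.1, a') + N (p.1, a) (q.1, a'))
        = (Matrix.of fun a a' => M (p.1, a) (q.1, a'))
          + (Matrix.of fun a a' => N (p.1, a) (q.1, a')) := by
      ext a a'; simp [Matrix.add_apply]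
    simp only [Matrix.of_apply, Matrix.add_apply]
    rw [h, map_add]
    simp [Matrix.add_apply]
  map_smul' c M := by
    ext p q
    have h : (Matrix.of fun a a' => c • M (p.1, a) (q.1, a'))
        = c • (Matrix.of fun a a' => M (p.1, a) (q.1, a')) := by
      ext a a'; simp [Matrix.smul_apply]
    simp only [Matrix.of_apply, Matrix.smul_apply]
    rw [h, Φ.map_smul]
    simp [Matrix.smul_apply]

/-- A linear map is completely positive and trace preserving (a quantum channel). -/
def IsCPTP {A B : Type} [Fintype A] [Fintype B] (Φ : Matrix A A ℂ →ₗ[ℂ] Matrix B B ℂ) : Prop :=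
  (∀ (r : ℕ) (M : Matrix (Fin r × A) (Fin r × A) ℂ), M.PosSemidef → (idTensor Φ M).PosSemidef)
    ∧ ∀ M : Matrix A A ℂ, (Φ M).trace = M.trace

/-- The tensor product Φ ⊗ Ψ of two linear maps on matrices. -/
def tensorMap {A B C D : Type} [Fintype A] [DecidableEq A] [Fintype C]
    (Φ : Matrix A A ℂ →ₗ[ℂ] Matrix B B ℂ) (Ψ : Matrix C C ℂ →ₗ[ℂ] Matrix D D ℂ) :
    Matrix (A × C) (A × C) ℂ →ₗ[ℂ] Matrix (B × D) (B × D) ℂ where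
  toFun M := Matrix.of fun p q => ∑ a : A, ∑ a' : A,
      Φ (Matrix.single a a' 1) p.1 q.1
        * Ψ (Matrix.of fun c c' => M (a, c) (a', c')) p.2 q.2
  map_add' M N := by
    ext p q
    have h : ∀ a a' : A, (Matrix.of fun c c' => M (a, c) (a', c') + N (a, c) (a', c'))
        = (Matrix.of fun c c' => M (a, c) (a', c'))
          + (Matrix.of fun c c' => N (a, c) (a', c')) := by
      intro a a'; ext c c'; simp [Matrix.add_apply]
    simp only [Matrix.of_apply, Matrix.add_apply]
    rw [← Finset.sum_add_distrib]
    refine Finset.sum_congr rfl fun a _ => ?_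
    rw [← Finset.sum_add_distrib]
    refine Finset.sum_congr rfl fun a' _ => ?_
    rw [h a a', map_add]
    simp [Matrix.add_apply, mul_add]
  map_smul' k M := by
    ext p q
    have h : ∀ a a' : A, (Matrix.of fun c c' => k * M (a, c) (a', c'))
        = k • (Matrix.of fun c c' => M (a, c) (a', c')) := by
      intro a a'; ext c c'; simp [Matrix.smul_apply, smul_eq_mul]
    simp only [Matrix.of_apply, Matrix.smul_apply, smul_eq_mul, RingHom.id_apply]
    rw [Finset.mul_sum]
    refine Finset.sum_congr rfl fun a _ => ?_
    rw [Finset.mul_sum]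
    refine Finset.sum_congr rfl fun a' _ => ?_
    rw [h a a', Ψ.map_smul]
    simp only [Matrix.smul_apply, smul_eq_mul]
    ring
  
/-- The n-fold tensor power Φ^{⊗n} of a linear map on matrices. -/
def powMap {A B : Type} [Fintype A] [DecidableEq A] [Fintype B] [DecidableEq B]
    (Φ : Matrix A A ℂ →ₗ[ℂ] Matrix B B ℂ) :
    (n : ℕ) → (Matrix (Fin n → A) (Fin n → A) ℂ →ₗ[ℂ] Matrix (Fin n → B) (Fin n → B) ℂ)
  | 0 => (Matrix.reindexLinearEquiv ℂ ℂ (Equiv.ofUnique (Fin 0 → A) (Fin 0 → B))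
      (Equiv.ofUnique (Fin 0 → A) (Fin 0 → B))).toLinearMap
  | (n + 1) =>
      (Matrix.reindexLinearEquiv ℂ ℂ (Fin.insertNthEquiv (fun _ => B) 0).symm.symm
          (Fin.insertNthEquiv (fun _ => B) 0).symm.symm).toLinearMap
        ∘ₗ tensorMap Φ (powMap Φ n)
        ∘ₗ (Matrix.reindexLinearEquiv ℂ ℂ (Fin.insertNthEquiv (fun _ => A) 0).symm
          (Fin.insertNthEquiv (fun _ => A) 0).symm).toLinearMap

open scoped Classical in
/-- The von Neumann entropy (base 2), via the eigenvalues of a Hermitian matrix. -/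
def vnEntropy {ι : Type} [Fintype ι] [DecidableEq ι] (ρ : Matrix ι ι ℂ) : ℝ :=
  if h : ρ.IsHermitian then ∑ i, -(h.eigenvalues i * Real.logb 2 (h.eigenvalues i)) else 0

/-- The function g(ε) = (1+ε)log₂(1+ε) − ε log₂ ε (with the convention 0·log 0 = 0). -/
def gfun (x : ℝ) : ℝ := (1 + x) * Real.logb 2 (1 + x) - x * Real.logb 2 x

/-- A finite ensemble of density matrices. -/
structure Ensemble (A : Type) [Fintype A] where
  m : ℕ
  p : Fin m → ℝ
  p_nonneg : ∀ i, 0 ≤ p i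
  p_sum : ∑ i, p i = 1
  ρ : Fin m → Matrix A A ℂ
  ρ_density : ∀ i, IsDensity (ρ i)

/-- A finite ensemble of pure states, given by unit vectors. -/
structure PureEnsemble (A : Type) [Fintype A] where
  m : ℕ
  p : Fin m → ℝ
  p_nonneg : ∀ i, 0 ≤ p i
  p_sum : ∑ i, p i = 1
  v : Fin m → (A → ℂ)
  pure : ∀ i, IsDensity (vecState (v i))

/-- The Holevo information of a (channel given as a) linear map. -/
def holevoMap {A B : Type} [Fintype A] [Fintype B] [DecidableEq B]
    (Φ : Matrix A A ℂ →ₗ[ℂ] Matrix B B ℂ) : ℝ :=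
  ⨆ e : Ensemble A,
    (vnEntropy (Φ (∑ i, (e.p i : ℂ) • e.ρ i)) - ∑ i, e.p i * vnEntropy (Φ (e.ρ i)))

/-- The classical capacity: the regularized Holevo information. -/
def classicalCapacity {A B : Type} [Fintype A] [DecidableEq A] [Fintype B] [DecidableEq B]
    (Φ : Matrix A A ℂ →ₗ[ℂ] Matrix B B ℂ) : ℝ :=
  Filter.limsup (fun n : ℕ => holevoMap (powMap Φ n) / (n : ℝ)) Filter.atTop

/-- Half the diamond norm of the difference of two maps:
the supremum over reference sizes and density inputs of half the output trace distance. -/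
def diamondDist {A B : Type} [Fintype A] [Fintype B] [DecidableEq B]
    (Φ Ψ : Matrix A A ℂ →ₗ[ℂ] Matrix B B ℂ) : ℝ :=
  ⨆ r : ℕ, ⨆ ρ : {ρ : Matrix (Fin r × A) (Fin r × A) ℂ // IsDensity ρ},
    (1 / 2) * traceNorm (idTensor Φ ρ.1 - idTensor Ψ ρ.1)

/-- The diamond norm of the difference of two maps (without the factor 1/2). -/
def diamondDistFull {A B : Type} [Fintype A] [Fintype B] [DecidableEq B]
    (Φ Ψ : Matrix A A ℂ →ₗ[ℂ] Matrix B B ℂ) : ℝ :=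
  ⨆ r : ℕ, ⨆ ρ : {ρ : Matrix (Fin r × A) (Fin r × A) ℂ // IsDensity ρ},
    traceNorm (idTensor Φ ρ.1 - idTensor Ψ ρ.1)

/-- Conjugation ρ ↦ W ρ Wᴴ as a linear map. -/
def conjMap {ι κ : Type} [Fintype ι] [Fintype κ] (W : Matrix κ ι ℂ) :
    Matrix ι ι ℂ →ₗ[ℂ] Matrix κ κ ℂ where
  toFun ρ := W * ρ * Wᴴ
  map_add' ρ σ := by simp [Matrix.mul_add, Matrix.add_mul]
  map_smul' c ρ := by simp [Matrix.mul_smul, Matrix.smul_mul]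

/-- A classical–quantum state ∑ₓ p(x) |x⟩⟨x| ⊗ ρ(x). -/
def cqState {X ι : Type} [DecidableEq X] (p : X → ℝ) (ρ : X → Matrix ι ι ℂ) :
    Matrix (X × ι) (X × ι) ℂ :=
  Matrix.of fun a b => if a.1 = b.1 then (p a.1 : ℂ) * ρ a.1 a.2 b.2 else 0

/-- A generalized divergence: a family of real functionals on pairs of matrices, one for each
finite-dimensional system, satisfying the data-processing inequality under quantum channels. -/
structure GenDivergence where
  D : ∀ {ι : Type} [Fintype ι] [DecidableEq ι], Matrix ι ι ℂ → Matrix ι ι ℂ → ℝ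
  data_proc : ∀ {ι κ : Type} [Fintype ι] [DecidableEq ι] [Fintype κ] [DecidableEq κ]
      (Λ : Matrix ι ι ℂ →ₗ[ℂ] Matrix κ κ ℂ), IsCPTP Λ →
      ∀ ρ σ : Matrix ι ι ℂ, IsDensity ρ → σ.PosSemidef → D (Λ ρ) (Λ σ) ≤ D ρ σ

/-- The direct-sum property of a generalized divergence on classical–quantum states. -/
def HasDirectSum (𝒟 : GenDivergence) : Prop :=
  ∀ {X ι : Type} [Fintype X] [DecidableEq X] [Fintype ι] [DecidableEq ι]
    (p : X → ℝ), (∀ x, 0 ≤ p x) → (∑ x, p x) = 1 →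
    ∀ (ρ σ : X → Matrix ι ι ℂ), (∀ x, IsDensity (ρ x)) → (∀ x, IsDensity (σ x)) →
    𝒟.D (cqState p ρ) (cqState p σ) = ∑ x, p x * 𝒟.D (ρ x) (σ x)

/-- The generalized channel divergence: optimization over pure inputs with reference R ≅ A. -/
def chanDiv (𝒟 : GenDivergence) {A B : Type} [Fintype A] [DecidableEq A]
    [Fintype B] [DecidableEq B] (Φ Ψ : Matrix A A ℂ →ₗ[ℂ] Matrix B B ℂ) : ℝ :=
  ⨆ v : {v : A × A → ℂ // IsDensity (vecState v)},
    𝒟.D (idTensor Φ (vecState v.1)) (idTensor Ψ (vecState v.1))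

/-- The maximally entangled state on A ⊗ A. -/
def maxEnt (A : Type) [Fintype A] [DecidableEq A] : Matrix (A × A) (A × A) ℂ :=
  vecState (fun p => if p.1 = p.2 then (((Real.sqrt (Fintype.card A))⁻¹ : ℝ) : ℂ) else 0)

/-- The Choi operator of a linear map on matrices. -/
def choi {A B : Type} [Fintype A] [DecidableEq A]
    (Φ : Matrix A A ℂ →ₗ[ℂ] Matrix B B ℂ) : Matrix (A × B) (A × B) ℂ :=
  idTensor Φ (Matrix.of fun p q => if p.1 = p.2 ∧ q.1 = q.2 then 1 else 0)

/-- Separability of a bipartite operator: a finite sum of tensor products of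
positive semidefinite operators. -/
def IsSepState {A B : Type} [Fintype A] [Fintype B]
    (M : Matrix (A × B) (A × B) ℂ) : Prop :=
  ∃ (k : ℕ) (P : Fin k → Matrix A A ℂ) (Q : Fin k → Matrix B B ℂ),
    (∀ i, (P i).PosSemidef) ∧ (∀ i, (Q i).PosSemidef) ∧ M = ∑ i, P i ⊗ₖ Q i

/-- An entanglement-breaking channel: a channel whose Choi operator is separable. -/
def IsEBChannel {A B : Type} [Fintype A] [DecidableEq A] [Fintype B]
    (Φ : Matrix A A ℂ →ₗ[ℂ] Matrix B B ℂ) : Prop :=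
  IsCPTP Φ ∧ IsSepState (choi Φ)

/-- φ is a purification (with reference system R on the left) of the state ρ. -/
def IsPurification {R A : Type} [Fintype R] [Fintype A]
    (φ : Matrix (R × A) (R × A) ℂ) (ρ : Matrix A A ℂ) : Prop :=
  (∃ v : R × A → ℂ, φ = vecState v) ∧ IsDensity φ ∧ ptraceLeft φ = ρ

/-- The channel ρ ↦ tr_E (V ρ Vᴴ) induced by an isometry V : A → B ⊗ E. -/
def dilMap {A B E : Type} [Fintype A] [Fintype B] [Fintype E]
    (V : Matrix (B × E) A ℂ) : Matrix A A ℂ →ₗ[ℂ] Matrix B B ℂ where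
  toFun ρ := ptraceRight (V * ρ * Vᴴ)
  map_add' ρ σ := by
    ext a a'
    simp [ptraceRight, Matrix.mul_add, Matrix.add_mul, Matrix.add_apply,
      Finset.sum_add_distrib]
  map_smul' c ρ := by
    ext a a'
    simp [ptraceRight, Matrix.mul_smul, Matrix.smul_mul, Matrix.smul_apply,
      Finset.mul_sum, smul_eq_mul]

/-- The complementary channel ρ ↦ tr_B (V ρ Vᴴ) induced by an isometry V : A → B ⊗ E. -/
def complMap {A B E : Type} [Fintype A] [Fintype B] [Fintype E]
    (V : Matrix (B × E) A ℂ) : Matrix A A ℂ →ₗ[ℂ] Matrix E E ℂ where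
  toFun ρ := ptraceLeft (V * ρ * Vᴴ)
  map_add' ρ σ := by
    ext a a'
    simp [ptraceLeft, Matrix.mul_add, Matrix.add_mul, Matrix.add_apply,
      Finset.sum_add_distrib]
  map_smul' c ρ := by
    ext a a'
    simp [ptraceLeft, Matrix.mul_smul, Matrix.smul_mul, Matrix.smul_apply,
      Finset.mul_sum, smul_eq_mul]

/-- A Hadamard channel: some Stinespring dilation has entanglement-breaking complement. -/
def IsHadamardChan {A B : Type} [Fintype A] [DecidableEq A] [Fintype B] [DecidableEq B]
    (Φ : Matrix A A ℂ →ₗ[ℂ] Matrix B B ℂ) : Prop :=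
  ∃ (e : ℕ) (V : Matrix (B × Fin e) A ℂ), Vᴴ * V = 1 ∧
    (∀ ρ, Φ ρ = ptraceRight (V * ρ * Vᴴ)) ∧ IsSepState (choi (complMap V))

/-- Covariance of a channel with respect to unitary representations of a group. -/
def CovariantChan {G A B : Type} [Group G] [Fintype A] [DecidableEq A]
    [Fintype B] [DecidableEq B]
    (U : G →* Matrix.unitaryGroup A ℂ) (V : G →* Matrix.unitaryGroup B ℂ)
    (Φ : Matrix A A ℂ →ₗ[ℂ] Matrix B B ℂ) : Prop :=
  ∀ (g : G) (ρ : Matrix A A ℂ),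
    (V g : Matrix B B ℂ) * Φ ρ * (V g : Matrix B B ℂ)ᴴ
      = Φ ((U g : Matrix A A ℂ) * ρ * (U g : Matrix A A ℂ)ᴴ)

/-- A unitary 1-design: averaging over the group sends every matrix to tr(ρ)·I/d. -/
def IsOneDesign {G A : Type} [Group G] [Fintype G] [Fintype A] [DecidableEq A]
    (U : G →* Matrix.unitaryGroup A ℂ) : Prop :=
  ∀ ρ : Matrix A A ℂ,
    (Fintype.card G : ℂ)⁻¹ • ∑ g, (U g : Matrix A A ℂ) * ρ * (U g : Matrix A A ℂ)ᴴ
      = (ρ.trace * (Fintype.card A : ℂ)⁻¹) • (1 : Matrix A A ℂ)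

/-- Pauli X. -/
def σX : Mat 2 := !![0, 1; 1, 0]
/-- Pauli Y. -/
def σY : Mat 2 := !![0, -Complex.I; Complex.I, 0]
/-- Pauli Z. -/
def σZ : Mat 2 := !![1, 0; 0, -1]

/-- The Pauli twirl of a qubit channel. -/
def pauliTwirl (Φ : Mat 2 →ₗ[ℂ] Mat 2) : Mat 2 →ₗ[ℂ] Mat 2 :=
  ((4 : ℂ)⁻¹) • (Φ + conjMap σX ∘ₗ Φ ∘ₗ conjMap σX + conjMap σY ∘ₗ Φ ∘ₗ conjMap σY
    + conjMap σZ ∘ₗ Φ ∘ₗ conjMap σZ)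

/-- The amplitude damping channel with damping parameter p. -/
def ampDamp (p : ℝ) : Mat 2 →ₗ[ℂ] Mat 2 :=
  conjMap (!![1, 0; 0, ((Real.sqrt (1 - p) : ℝ) : ℂ)] : Mat 2)
    + conjMap (!![0, ((Real.sqrt p : ℝ) : ℂ); 0, 0] : Mat 2)

/-- The qubit depolarizing channel with parameter p. -/
def depol (p : ℝ) : Mat 2 →ₗ[ℂ] Mat 2 :=
  (((1 - p : ℝ) : ℂ)) • LinearMap.id
    + (((p / 3 : ℝ) : ℂ)) • (conjMap σX + conjMap σY + conjMap σZ)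

/-- The Z-dephasing channel with parameter p. -/
def deph (p : ℝ) : Mat 2 →ₗ[ℂ] Mat 2 :=
  (((1 - p : ℝ) : ℂ)) • LinearMap.id + ((p : ℝ) : ℂ) • conjMap σZ

/-- The entanglement-breaking parameter: distance to the nearest EB channel. -/
def ebParam {A B : Type} [Fintype A] [DecidableEq A] [Fintype B] [DecidableEq B]
    (Φ : Matrix A A ℂ →ₗ[ℂ] Matrix B B ℂ) : ℝ :=
  ⨅ M : {M : Matrix A A ℂ →ₗ[ℂ] Matrix B B ℂ // IsEBChannel M}, diamondDist Φ M.1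

end

set_option maxHeartbeats 2000000 in
lemma delta_eq (p : ℝ) (hp0 : 0 ≤ p) (hp1 : p ≤ 1) (ρ : Mat 2) :
    ampDamp p ρ - pauliTwirl (ampDamp p) ρ = (((p : ℂ)/2) * ρ.trace) • σZ := by
  have hconj : ∀ (W M : Mat 2), conjMap W M = W * M * Wᴴ := fun _ _ => rfl
  have h1 : (!![1, 0; 0, ((Real.sqrt (1 - p) : ℝ) : ℂ)] : Mat 2)ᴴ
      = !![1, 0; 0, ((Real.sqrt (1 - p) : ℝ) : ℂ)] := by
    ext i j; fin_cases i <;> fin_cases j <;> simp [Matrix.conjTranspose_apply]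
  have h2 : (!![0, ((Real.sqrt p : ℝ) : ℂ); 0, 0] : Mat 2)ᴴ
      = !![0, 0; ((Real.sqrt p : ℝ) : ℂ), 0] := by
    ext i j; fin_cases i <;> fin_cases j <;> simp [Matrix.conjTranspose_apply]
  have hX : σXᴴ = σX := by
    ext i j; fin_cases i <;> fin_cases j <;> simp [σX, Matrix.conjTranspose_apply]
  have hY : σYᴴ = σY := by
    ext i j; fin_cases i <;> fin_cases j <;> simp [σY, Matrix.conjTranspose_apply]
  have hZ : σZᴴ = σZ := by
    ext i j; fin_cases i <;> fin_cases j <;> simp [σZ, Matrix.conjTranspose_apply]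
  simp only [ampDamp, pauliTwirl, LinearMap.smul_apply, LinearMap.add_apply,
    LinearMap.comp_apply, hconj, h1, h2, hX, hY, hZ, Matrix.trace_fin_two]
  rw [Matrix.eta_fin_two ρ]
  simp only [σX, σY, σZ, Matrix.mul_fin_two, Matrix.smul_of, Matrix.smul_cons, smul_eq_mul,
    Matrix.smul_empty, Matrix.sub_apply, Matrix.add_apply]
  rw [← Matrix.ext_iff]
  simp only [Fin.forall_fin_two, Matrix.sub_apply, Matrix.add_apply, Matrix.smul_apply,
    Matrix.cons_val', Matrix.cons_val_zero, Matrix.cons_val_one, Matrix.head_cons,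
    Matrix.head_fin_const, Matrix.empty_val', Matrix.cons_val_fin_one, smul_eq_mul]
  have hs : ((Real.sqrt (1 - p) : ℝ) : ℂ) ^ 2 = ((1 - p : ℝ) : ℂ) := by
    rw [← Complex.ofReal_pow, Real.sq_sqrt (by linarith)]
  have ht : ((Real.sqrt p : ℝ) : ℂ) ^ 2 = ((p : ℝ) : ℂ) := by
    rw [← Complex.ofReal_pow, Real.sq_sqrt hp0]
  norm_num
  refine ⟨⟨?_, ?_⟩, ?_, ?_⟩ <;> ring_nf <;> rw [Complex.I_pow_four] <;> ring_nf <;>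
    simp [hs, ht] <;> ring

lemma kron_conjTranspose {R S : Type} (A : Matrix R R ℂ) (B : Matrix S S ℂ) :
    (A ⊗ₖ B)ᴴ = Aᴴ ⊗ₖ Bᴴ := by
  ext ⟨r, s⟩ ⟨r', s'⟩
  simp [Matrix.conjTranspose_apply, Matrix.kroneckerMap_apply, star_mul', mul_comm]

lemma sZ_mul_sZ : σZ * σZ = 1 := by
  rw [σZ, Matrix.mul_fin_two, Matrix.one_fin_two]; norm_num

lemma kron_posSemidef {R S : Type} [Fintype R] [DecidableEq R] [Fintype S] [DecidableEq S]
    {A : Matrix R R ℂ} {B : Matrix S S ℂ} (hA : A.PosSemidef) (hB : B.PosSemidef) :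
    (A ⊗ₖ B).PosSemidef := by
  exact hA.kronecker hB

open scoped MatrixOrder in
lemma traceNorm_kron_smul_sZ {R : Type} [Fintype R] [DecidableEq R]
    (σ : Matrix R R ℂ) (hσ : σ.PosSemidef) (hτ : σ.trace = 1) (c : ℝ) (hc : 0 ≤ c) :
    traceNorm (σ ⊗ₖ (((c : ℝ) : ℂ) • σZ)) = 2 * c := by
  set D := σ ⊗ₖ (((c : ℝ) : ℂ) • σZ) with hD
  have hcI : ((c : ℝ) : ℂ) • (1 : Mat 2) = Matrix.diagonal (fun _ => ((c : ℝ) : ℂ)) := by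
    ext i j
    by_cases h : i = j <;>
      simp [Matrix.smul_apply, Matrix.one_apply, Matrix.diagonal_apply, h]
  have hT : (σ ⊗ₖ (((c : ℝ) : ℂ) • (1 : Mat 2))).PosSemidef := by
    refine kron_posSemidef hσ ?_
    rw [hcI]
    exact Matrix.PosSemidef.diagonal (Pi.le_def.mpr fun i => Complex.zero_le_real.mpr hc)
  have hsq : (σ ⊗ₖ (((c : ℝ) : ℂ) • (1 : Mat 2))) ^ 2 = Dᴴ * D := by
    rw [hD, kron_conjTranspose, pow_two, ← Matrix.mul_kronecker_mul,
      ← Matrix.mul_kronecker_mul]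
    rw [hσ.1]
    have hZH : σZᴴ = σZ := by
      ext i j; fin_cases i <;> fin_cases j <;> simp [σZ, Matrix.conjTranspose_apply]
    rw [Matrix.conjTranspose_smul, hZH, Matrix.smul_mul, Matrix.mul_smul,
      Matrix.smul_mul, Matrix.mul_smul, sZ_mul_sZ, Matrix.mul_one, smul_smul, smul_smul]
    simp [Complex.conj_ofReal]
  have hsqrt : σ ⊗ₖ (((c : ℝ) : ℂ) • (1 : Mat 2)) = CFC.sqrt (Dᴴ * D) :=
    (CFC.sqrt_unique (by rw [← pow_two]; exact hsq) hT.nonneg).symm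
  have htn : traceNorm D = (CFC.sqrt (Dᴴ * D)).trace.re := by
    rw [CFC.sqrt_eq_real_sqrt _ (Matrix.posSemidef_conjTranspose_mul_self D).nonneg, cfcₙ_eq_cfc,
      (Matrix.posSemidef_conjTranspose_mul_self D).1.cfc_eq]
    rfl
  rw [htn, ← hsqrt, Matrix.trace_kronecker, hτ, Matrix.trace_smul, Matrix.trace_one]
  simp
  ring

lemma ptraceRight_trace {A E : Type} [Fintype A] [Fintype E]
    (M : Matrix (A × E) (A × E) ℂ) : (ptraceRight M).trace = M.trace := by
  simp [ptraceRight, Matrix.trace, Matrix.diag, Fintype.sum_prod_type]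

lemma ptraceRight_posSemidef {A E : Type} [Fintype A] [Fintype E] [DecidableEq E]
    {M : Matrix (A × E) (A × E) ℂ} (hM : M.PosSemidef) : (ptraceRight M).PosSemidef := by
  refine Matrix.PosSemidef.of_dotProduct_mulVec_nonneg ?_ ?_
  · ext a a'
    simp only [Matrix.conjTranspose_apply, ptraceRight, Matrix.of_apply, star_sum]
    refine Finset.sum_congr rfl fun e _ => ?_
    exact congrFun (congrFun hM.1 (a, e)) (a', e)
  · intro v
    have key : dotProduct (star v) ((ptraceRight M).mulVec v)
        = ∑ e : E, dotProduct (star (fun q : A × E => if q.2 = e then v q.1 else 0))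
            (M.mulVec (fun q : A × E => if q.2 = e then v q.1 else 0)) := by
      simp only [dotProduct, Matrix.mulVec, ptraceRight, Matrix.of_apply, Pi.star_apply,
        Fintype.sum_prod_type, apply_ite star, star_zero, ite_mul, mul_ite, zero_mul, mul_zero,
        Finset.sum_ite_eq', Finset.mem_univ, if_true, Finset.mul_sum, Finset.sum_mul]
      conv_lhs => rw [Finset.sum_congr rfl fun a _ =>
        Finset.sum_comm (f := fun a' e => star (v a) * (M (a, e) (a', e) * v a'))]
      rw [Finset.sum_comm]
      refine Finset.sum_congr rfl fun e _ => ?_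
      refine Finset.sum_congr rfl fun a _ => ?_
      rw [Finset.sum_comm]
      simp [Finset.sum_ite_eq', Finset.mem_univ]
    rw [key]
    exact Finset.sum_nonneg fun e _ => hM.dotProduct_mulVec_nonneg _

lemma diff_eq (p : ℝ) (hp0 : 0 ≤ p) (hp1 : p ≤ 1) {R : Type} [Fintype R]
    (M : Matrix (R × Fin 2) (R × Fin 2) ℂ) :
    idTensor (ampDamp p) M - idTensor (pauliTwirl (ampDamp p)) M
      = ptraceRight M ⊗ₖ ((((p / 2 : ℝ)) : ℂ) • σZ) := by
  ext ⟨r, b⟩ ⟨r', b'⟩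
  have h := delta_eq p hp0 hp1 (Matrix.of fun a a' => M (r, a) (r', a'))
  have h2 := congrFun (congrFun h b) b'
  simp only [Matrix.sub_apply, Matrix.smul_apply, smul_eq_mul] at h2
  simp only [idTensor, LinearMap.coe_mk, AddHom.coe_mk, Matrix.sub_apply, Matrix.of_apply,
    Matrix.kroneckerMap_apply, Matrix.smul_apply, smul_eq_mul]
  rw [h2]
  simp only [Matrix.trace, Matrix.diag, Matrix.of_apply, ptraceRight]
  push_cast
  ring

lemma density_exists : IsDensity (Matrix.diagonal (fun _ : Fin 1 × Fin 2 => ((2 : ℂ))⁻¹)) := by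
  constructor
  · refine Matrix.PosSemidef.diagonal (Pi.le_def.mpr fun i => ?_)
    have : ((2 : ℂ))⁻¹ = (((2 : ℝ)⁻¹ : ℝ) : ℂ) := by norm_num
    rw [this]
    exact Complex.zero_le_real.mpr (by norm_num)
  · simp [Matrix.trace_diagonal]


/-- The Pauli covariance parameter of the amplitude damping channel A_p
equals p/2. -/
theorem cov_pauli_ampDamp (p : ℝ) (hp : p ∈ Set.Icc (0 : ℝ) 1) :
    diamondDist (ampDamp p) (pauliTwirl (ampDamp p)) = p / 2 := by

  obtain ⟨hp0, hp1⟩ := hp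
  have hval : ∀ (r : ℕ) (ρ : {ρ : Matrix (Fin r × Fin 2) (Fin r × Fin 2) ℂ // IsDensity ρ}),
      (1 / 2 : ℝ) * traceNorm (idTensor (ampDamp p) ρ.1
        - idTensor (pauliTwirl (ampDamp p)) ρ.1) = p / 2 := by
    intro r ρ
    rw [diff_eq p hp0 hp1, traceNorm_kron_smul_sZ _ (ptraceRight_posSemidef ρ.2.1)
      (by rw [ptraceRight_trace, ρ.2.2]) _ (by linarith)]
    ring
  rw [diamondDist]
  apply le_antisymm
  · refine ciSup_le fun r => ?_
    by_cases h : Nonempty {ρ : Matrix (Fin r × Fin 2) (Fin r × Fin 2) ℂ // IsDensity ρ}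
    · exact ciSup_le fun ρ => le_of_eq (hval r ρ)
    · rw [not_nonempty_iff] at h
      rw [Real.iSup_of_isEmpty _]
      linarith
  · set F : ℕ → ℝ := fun r => ⨆ ρ : {ρ : Matrix (Fin r × Fin 2) (Fin r × Fin 2) ℂ //
      IsDensity ρ}, (1 / 2 : ℝ) * traceNorm (idTensor (ampDamp p) ρ.1
        - idTensor (pauliTwirl (ampDamp p)) ρ.1) with hF
    have hFle : ∀ r, F r ≤ p / 2 := by
      intro r
      by_cases h : Nonempty {ρ : Matrix (Fin r × Fin 2) (Fin r × Fin 2) ℂ // IsDensity ρ}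
      · exact ciSup_le fun ρ => le_of_eq (hval r ρ)
      · rw [not_nonempty_iff] at h
        simp only [hF]
        rw [Real.iSup_of_isEmpty _]
        linarith
    have hb : BddAbove (Set.range F) := ⟨p / 2, by rintro x ⟨r, rfl⟩; exact hFle r⟩
    refine le_trans ?_ (le_ciSup hb 1)
    have hbin : BddAbove (Set.range fun ρ : {ρ : Matrix (Fin 1 × Fin 2) (Fin 1 × Fin 2) ℂ //
        IsDensity ρ} => (1 / 2 : ℝ) * traceNorm (idTensor (ampDamp p) ρ.1
          - idTensor (pauliTwirl (ampDamp p)) ρ.1)) :=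
      ⟨p / 2, by rintro x ⟨ρ, rfl⟩; exact le_of_eq (hval 1 ρ)⟩
    exact (hval 1 ⟨_, density_exists⟩).symm.le.trans (le_ciSup hbin ⟨_, density_exists⟩)
end

section
/- Let p ∈ [0,1], let A_p be the amplitude damping channel, and let (A_p)_P be its Pauli twirl. Then for every pure state ψ_{RA} on ℂ²⊗ℂ², ‖(id_R ⊗ A_p)(Φ_{RA}) − (id_R ⊗ (A_p)_P)(Φ_{RA})‖₁ ≥ ‖(id_R ⊗ A_p)(ψ_{RA}) − (id_R ⊗ (A_p)_P)(ψ_{RA})‖₁, where Φ_{RA} is the maximally entangled state; moreover ‖(id_R ⊗ A_p)(Φ_{RA}) − (id_R ⊗ (A_p)_P)(Φ_{RA})‖₁ = p. -/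
open scoped BigOperators Kronecker ComplexOrder
open Matrix MeasureTheory Filter

lemma ampDamp_sub_twirl (p : ℝ) (hp : p ∈ Set.Icc (0:ℝ) 1) (A : Mat 2) (i j : Fin 2) :
    (ampDamp p A - pauliTwirl (ampDamp p) A) i j = (p/2 : ℂ) * A.trace * σZ i j := by
  have h1 : (Real.sqrt p : ℂ) * (Real.sqrt p : ℂ) = (p : ℂ) := by
    norm_cast; exact Real.mul_self_sqrt hp.1
  have h2 : (Real.sqrt (1-p) : ℂ) * (Real.sqrt (1-p) : ℂ) = ((1-p : ℝ) : ℂ) := by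
    norm_cast; exact Real.mul_self_sqrt (by linarith [hp.2])
  fin_cases i <;> fin_cases j <;>
  · simp only [ampDamp, pauliTwirl, conjMap, LinearMap.add_apply, LinearMap.smul_apply,
      LinearMap.comp_apply, LinearMap.coe_mk, AddHom.coe_mk, Matrix.sub_apply,
      Matrix.add_apply, Matrix.smul_apply, smul_eq_mul, Matrix.mul_apply,
      Fin.sum_univ_two, Matrix.conjTranspose_apply, Matrix.trace, Matrix.diag]
    simp [σX, σY, σZ, Complex.ext_iff]
    try ring_nf
    try simp only [Real.sq_sqrt hp.1, Real.sq_sqrt (show (0:ℝ) ≤ 1-p by linarith [hp.2])]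
    try norm_num
    try constructor <;> ring
    try ring

lemma vecState_posSemidef {ι : Type} [Fintype ι] [DecidableEq ι] (v : ι → ℂ) :
    (vecState v).PosSemidef := by
  have h : vecState v = (Matrix.of (fun (_ : Fin 1) j => star (v j)))ᴴ
      * (Matrix.of fun (_ : Fin 1) j => star (v j)) := by
    ext i j
    simp [vecState, Matrix.mul_apply]
  rw [h]
  exact Matrix.posSemidef_conjTranspose_mul_self _

lemma maxEnt_isDensity : IsDensity (maxEnt (Fin 2)) := by
  refine ⟨vecState_posSemidef _, ?_⟩
  have h2 : Real.sqrt 2 * Real.sqrt 2 = 2 := Real.mul_self_sqrt (by norm_num)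
  simp [maxEnt, vecState, Matrix.trace, Matrix.diag, Fintype.sum_prod_type,
    Fin.sum_univ_two, ← Complex.ofReal_inv, ← Complex.ofReal_mul]
  norm_num
  rw [← mul_inv]
  norm_cast
  rw [h2]
  norm_num

open scoped MatrixOrder in
lemma key_dist (p : ℝ) (hp : p ∈ Set.Icc (0:ℝ) 1)
    (M : Matrix (Fin 2 × Fin 2) (Fin 2 × Fin 2) ℂ) (hM : IsDensity M) :
    traceNorm (idTensor (ampDamp p) M - idTensor (pauliTwirl (ampDamp p)) M) = p := by
  classical
  set ρ : Mat 2 := ptraceRight M with hρdef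
  have hMH := hM.1.1
  have hconjM : ∀ a b, star (M a b) = M b a := fun a b => by
    conv_rhs => rw [← hMH]
    rfl
  have hconj : ∀ a b, star (ρ a b) = ρ b a := by
    intro a b
    simp [hρdef, ptraceRight, star_sum, hconjM]
  have hρtr : ρ.trace = 1 := by
    rw [← hM.2]
    simp [hρdef, ptraceRight, Matrix.trace, Matrix.diag, Fintype.sum_prod_type]
  have hρpsd : ρ.PosSemidef := by
    refine Matrix.PosSemidef.of_dotProduct_mulVec_nonneg ?_ ?_
    · ext a b; exact hconj b a
    · intro y
      have hrw : star y ⬝ᵥ ρ *ᵥ y = ∑ e : Fin 2,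
          star (fun q : Fin 2 × Fin 2 => if q.2 = e then y q.1 else 0) ⬝ᵥ
            M *ᵥ (fun q : Fin 2 × Fin 2 => if q.2 = e then y q.1 else 0) := by
        simp [dotProduct, Matrix.mulVec, hρdef, ptraceRight,
          Fintype.sum_prod_type, Fin.sum_univ_two, Finset.mul_sum, Finset.sum_mul]
        ring
      rw [hrw]
      exact Finset.sum_nonneg fun e _ => hM.1.dotProduct_mulVec_nonneg _
  set D : Matrix (Fin 2 × Fin 2) (Fin 2 × Fin 2) ℂ :=
    idTensor (ampDamp p) M - idTensor (pauliTwirl (ampDamp p)) M with hDdef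
  have hD : ∀ x y : Fin 2 × Fin 2, D x y = ((p:ℂ)/2) * ρ x.1 y.1 * σZ x.2 y.2 := by
    intro x y
    have h0 := ampDamp_sub_twirl p hp (Matrix.of fun a a' => M (x.1, a) (y.1, a')) x.2 y.2
    simp only [Matrix.sub_apply] at h0
    have hgoal : D x y = (ampDamp p) (Matrix.of fun a a' => M (x.1, a) (y.1, a')) x.2 y.2
        - (pauliTwirl (ampDamp p)) (Matrix.of fun a a' => M (x.1, a) (y.1, a')) x.2 y.2 := rfl
    rw [hgoal, h0]
    have htr : (Matrix.of fun a a' => M (x.1, a) (y.1, a')).trace = ρ x.1 y.1 := by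
      simp [Matrix.trace, Matrix.diag, hρdef, ptraceRight]
    rw [htr]
  set S : Matrix (Fin 2 × Fin 2) (Fin 2 × Fin 2) ℂ :=
    Matrix.of fun x y => ((p:ℂ)/2) * ρ x.1 y.1 * (if x.2 = y.2 then 1 else 0) with hSdef
  have hstar : star ((p:ℂ)/2) = (p:ℂ)/2 := by simp [Complex.ext_iff]
  have hSpsd : S.PosSemidef := by
    refine Matrix.PosSemidef.of_dotProduct_mulVec_nonneg ?_ ?_
    · ext x y
      simp only [Matrix.conjTranspose_apply, hSdef, Matrix.of_apply]
      by_cases h : x.2 = y.2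
      · simp only [h, if_pos rfl, if_pos (Eq.refl y.2), eq_comm (a := x.2)]
        simp [star_mul', hconj, hstar, h]
      · have h' : ¬ (y.2 = x.2) := fun hh => h hh.symm
        simp [h, h']
    · intro x
      have hrw : star x ⬝ᵥ S *ᵥ x = ((p:ℂ)/2) * ∑ b : Fin 2,
          star (fun r : Fin 2 => x (r, b)) ⬝ᵥ ρ *ᵥ (fun r : Fin 2 => x (r, b)) := by
        simp [dotProduct, Matrix.mulVec, hSdef, Fintype.sum_prod_type,
          Fin.sum_univ_two, Finset.mul_sum, Finset.sum_mul, Fin.forall_fin_two]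
        ring
      rw [hrw]
      refine mul_nonneg ?_ (Finset.sum_nonneg fun b _ => hρpsd.dotProduct_mulVec_nonneg _)
      rw [show ((p:ℂ)/2) = (((p/2 : ℝ)):ℂ) by push_cast; ring]
      rw [Complex.zero_le_real]
      linarith [hp.1]
  have hS2 : S ^ 2 = Dᴴ * D := by
    ext x y
    obtain ⟨r, b⟩ := x
    obtain ⟨r', b'⟩ := y
    simp only [pow_two, Matrix.mul_apply, Matrix.conjTranspose_apply, Fintype.sum_prod_type]
    simp only [hD, hSdef, Matrix.of_apply, star_mul', hconj]
    simp only [hstar]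
    fin_cases b <;> fin_cases b' <;>
      simp [σZ, Fin.sum_univ_two] <;> try ring
  have hsqrt : traceNorm D = S.trace.re := by
    have h1 : cfc Real.sqrt (Dᴴ * D) = S := by
      rw [← cfcₙ_eq_cfc (f := Real.sqrt) (a := Dᴴ * D) (by fun_prop) Real.sqrt_zero,
        ← CFC.sqrt_eq_real_sqrt _ (Matrix.posSemidef_conjTranspose_mul_self D).nonneg,
        CFC.sqrt_eq_iff _ _ (Matrix.posSemidef_conjTranspose_mul_self D).nonneg hSpsd.nonneg,
        ← sq, hS2]
    rw [(Matrix.posSemidef_conjTranspose_mul_self D).1.cfc_eq] at h1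
    rw [← h1]
    rfl
  have htrS : S.trace = (p : ℂ) := by
    have h01 : ρ 0 0 + ρ 1 1 = 1 := by
      have := hρtr
      simpa [Matrix.trace, Matrix.diag, Fin.sum_univ_two] using this
    simp [Matrix.trace, Matrix.diag, hSdef, Fintype.sum_prod_type, Fin.sum_univ_two]
    linear_combination (p : ℂ) * h01
  rw [hsqrt, htrS]
  simp

/-- For the amplitude damping channel and its Pauli twirl, the maximally
entangled state maximizes the output trace distance over all pure inputs, and the value
at the maximally entangled state equals p. -/
theorem ampDamp_twirl_maxEnt_optimal (p : ℝ) (hp : p ∈ Set.Icc (0 : ℝ) 1) :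
    (∀ v : Fin 2 × Fin 2 → ℂ, IsDensity (vecState v) →
      traceNorm (idTensor (ampDamp p) (vecState v)
          - idTensor (pauliTwirl (ampDamp p)) (vecState v))
        ≤ traceNorm (idTensor (ampDamp p) (maxEnt (Fin 2))
            - idTensor (pauliTwirl (ampDamp p)) (maxEnt (Fin 2)))) ∧
    traceNorm (idTensor (ampDamp p) (maxEnt (Fin 2))
        - idTensor (pauliTwirl (ampDamp p)) (maxEnt (Fin 2))) = p := by
  have hmax := key_dist p hp _ maxEnt_isDensity
  refine ⟨fun v hv => ?_, hmax⟩
  rw [hmax, key_dist p hp _ hv]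
end
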